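/- Let (X, d) be a compact quasihypermetric space with M(X) < ∞, and for μ ∈ M(X) write ‖μ‖_E = ((M(X)+1)·μ(X)² − I(μ))^{1/2} for the seminorm of the space E(X). Then (1) |μ(X)| ≤ ‖μ‖_E for all μ ∈ M(X), and (2) ‖d_μ‖_∞ ≤ (M(X) + 1 + (M(X)+1)^{1/2}) · ‖μ‖_E for all μ ∈ M(X). -/

import Mathlib

open MeasureTheory Filter Topology

/-- `dmu μ x = ∫ d(x,y) dμ(y)`, defined via the Jordan decomposition of the
finite signed Borel measure `μ`. -/
noncomputable def dmu {X : Type*} [MetricSpace X] [MeasurableSpace X]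
    (μ : SignedMeasure X) (x : X) : ℝ :=
  (∫ y, dist x y ∂μ.toJordanDecomposition.posPart) -
  (∫ y, dist x y ∂μ.toJordanDecomposition.negPart)

/-- `Ibil μ ν = ∫∫ d(x,y) dμ(x)dν(y)`. -/
noncomputable def Ibil {X : Type*} [MetricSpace X] [MeasurableSpace X]
    (μ ν : SignedMeasure X) : ℝ :=
  (∫ x, dmu ν x ∂μ.toJordanDecomposition.posPart) -
  (∫ x, dmu ν x ∂μ.toJordanDecomposition.negPart)

/-- The energy integral `I(μ) = I(μ, μ)`. -/
noncomputable def Ien {X : Type*} [MetricSpace X] [MeasurableSpace X]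
    (μ : SignedMeasure X) : ℝ := Ibil μ μ

/-- The constant `M(X) = sup { I(μ) : μ a signed Borel measure of total mass 1 }`,
as an extended real number. -/
noncomputable def MXsup (X : Type*) [MetricSpace X] [MeasurableSpace X] : EReal :=
  ⨆ μ : {μ : SignedMeasure X // μ Set.univ = 1}, ((Ien μ.1 : ℝ) : EReal)

namespace Stmt18Aux

set_option linter.unusedSectionVars false

variable {X : Type*} [MetricSpace X] [CompactSpace X] [MeasurableSpace X] [BorelSpace X]

lemma cint {Y : Type*} [MetricSpace Y] [CompactSpace Y] [MeasurableSpace Y] [BorelSpace Y]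
    {f : Y → ℝ} (hf : Continuous f) (m : Measure Y) [IsFiniteMeasure m] :
    Integrable f m :=
  hf.integrable_of_hasCompactSupport (HasCompactSupport.of_compactSpace f)

lemma cdist (x : X) : Continuous fun y : X => dist x y :=
  continuous_const.dist continuous_id

lemma cont_dint (a : Measure X) [IsFiniteMeasure a] :
    Continuous (fun x => ∫ y, dist x y ∂a) := by
  refine (LipschitzWith.of_dist_le_mul (K := (a Set.univ).toReal.toNNReal) ?_).continuous
  intro x x'
  rw [Real.dist_eq, ← integral_sub (cint (cdist x) a) (cint (cdist x') a)]
  calc |∫ y, (dist x y - dist x' y) ∂a| ≤ ∫ y, |dist x y - dist x' y| ∂a :=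
      by simpa [Real.norm_eq_abs] using
        norm_integral_le_integral_norm (μ := a) (fun y => dist x y - dist x' y)
    _ ≤ ∫ _, dist x x' ∂a := by
        refine integral_mono ((cint (cdist x) a).sub (cint (cdist x') a)).abs
          (integrable_const _) ?_
        intro y; exact abs_dist_sub_le x x' y
    _ = (a Set.univ).toReal * dist x x' := by rw [integral_const, smul_eq_mul, measureReal_def]
    _ = ((a Set.univ).toReal.toNNReal : ℝ) * dist x x' := by
        rw [Real.coe_toNNReal _ ENNReal.toReal_nonneg]

lemma cont_dmu (ν : SignedMeasure X) : Continuous (dmu ν) := by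
  unfold dmu; exact (cont_dint _).sub (cont_dint _)

/-- signed integral -/
noncomputable def sint (μ : SignedMeasure X) (f : X → ℝ) : ℝ :=
  (∫ x, f x ∂μ.toJordanDecomposition.posPart) - (∫ x, f x ∂μ.toJordanDecomposition.negPart)

lemma sint_eq (μ : SignedMeasure X) (p n : Measure X) [IsFiniteMeasure p] [IsFiniteMeasure n]
    (h : μ = p.toSignedMeasure - n.toSignedMeasure) {f : X → ℝ} (hf : Continuous f) :
    sint μ f = (∫ x, f x ∂p) - (∫ x, f x ∂n) := by
  have hd : μ.toJordanDecomposition.posPart.toSignedMeasure -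
      μ.toJordanDecomposition.negPart.toSignedMeasure =
      p.toSignedMeasure - n.toSignedMeasure := by
    have h1 := μ.toSignedMeasure_toJordanDecomposition
    unfold MeasureTheory.JordanDecomposition.toSignedMeasure at h1
    rw [← h]; exact h1
  have hm : μ.toJordanDecomposition.posPart + n = p + μ.toJordanDecomposition.negPart := by
    rw [← Measure.toSignedMeasure_eq_toSignedMeasure_iff,
      Measure.toSignedMeasure_add, Measure.toSignedMeasure_add]
    linear_combination (norm := abel) hd
  have hi : (∫ x, f x ∂(μ.toJordanDecomposition.posPart + n)) =
      ∫ x, f x ∂(p + μ.toJordanDecomposition.negPart) := by rw [hm]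
  rw [integral_add_measure (cint hf _) (cint hf _),
    integral_add_measure (cint hf _) (cint hf _)] at hi
  unfold sint; linarith

lemma sint_add (μ ν : SignedMeasure X) {f : X → ℝ} (hf : Continuous f) :
    sint (μ + ν) f = sint μ f + sint ν f := by
  rw [sint_eq (μ + ν) (μ.toJordanDecomposition.posPart + ν.toJordanDecomposition.posPart)
    (μ.toJordanDecomposition.negPart + ν.toJordanDecomposition.negPart) ?_ hf,
    integral_add_measure (cint hf _) (cint hf _),
    integral_add_measure (cint hf _) (cint hf _)]
  · unfold sint; ring
  · rw [Measure.toSignedMeasure_add, Measure.toSignedMeasure_add]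
    have h1 := μ.toSignedMeasure_toJordanDecomposition
    have h2 := ν.toSignedMeasure_toJordanDecomposition
    unfold MeasureTheory.JordanDecomposition.toSignedMeasure at h1 h2
    linear_combination (norm := abel) -h1 - h2

lemma sint_smul (μ : SignedMeasure X) (r : ℝ) {f : X → ℝ} (hf : Continuous f) :
    sint (r • μ) f = r * sint μ f := by
  unfold sint
  rw [μ.toJordanDecomposition_smul_real]
  rcases le_or_gt 0 r with hr | hr
  · rw [MeasureTheory.JordanDecomposition.real_smul_posPart_nonneg _ _ hr,
      MeasureTheory.JordanDecomposition.real_smul_negPart_nonneg _ _ hr]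
    simp only [MeasureTheory.JordanDecomposition.smul_posPart,
      MeasureTheory.JordanDecomposition.smul_negPart, integral_smul_nnreal_measure]
    simp [NNReal.smul_def, Real.coe_toNNReal _ hr]; ring
  · rw [MeasureTheory.JordanDecomposition.real_smul_posPart_neg _ _ hr,
      MeasureTheory.JordanDecomposition.real_smul_negPart_neg _ _ hr]
    simp only [MeasureTheory.JordanDecomposition.smul_posPart,
      MeasureTheory.JordanDecomposition.smul_negPart, integral_smul_nnreal_measure]
    simp [NNReal.smul_def, Real.coe_toNNReal _ (by linarith : (0:ℝ) ≤ -r)]; ring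

lemma J_comm (a b : Measure X) [IsFiniteMeasure a] [IsFiniteMeasure b] :
    ∫ x, ∫ y, dist x y ∂b ∂a = ∫ x, ∫ y, dist x y ∂a ∂b := by
  rw [integral_integral_swap (cint (continuous_dist) (a.prod b))]
  simp_rw [dist_comm]

lemma intdmu (a : Measure X) [IsFiniteMeasure a] (ν : SignedMeasure X) :
    ∫ x, dmu ν x ∂a = (∫ x, ∫ y, dist x y ∂ν.toJordanDecomposition.posPart ∂a) -
      (∫ x, ∫ y, dist x y ∂ν.toJordanDecomposition.negPart ∂a) := by
  unfold dmu; exact integral_sub (cint (cont_dint _) a) (cint (cont_dint _) a)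

lemma Ibil_comm (μ ν : SignedMeasure X) : Ibil μ ν = Ibil ν μ := by
  unfold Ibil
  rw [intdmu, intdmu, intdmu, intdmu,
    J_comm μ.toJordanDecomposition.posPart ν.toJordanDecomposition.posPart,
    J_comm μ.toJordanDecomposition.posPart ν.toJordanDecomposition.negPart,
    J_comm μ.toJordanDecomposition.negPart ν.toJordanDecomposition.posPart,
    J_comm μ.toJordanDecomposition.negPart ν.toJordanDecomposition.negPart]
  ring

lemma Ibil_add_left (μ ν ρ : SignedMeasure X) : Ibil (μ + ν) ρ = Ibil μ ρ + Ibil ν ρ :=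
  sint_add μ ν (cont_dmu ρ)

lemma Ibil_smul_left (r : ℝ) (μ ρ : SignedMeasure X) : Ibil (r • μ) ρ = r * Ibil μ ρ :=
  sint_smul μ r (cont_dmu ρ)

lemma Ibil_add_right (μ ν ρ : SignedMeasure X) : Ibil μ (ν + ρ) = Ibil μ ν + Ibil μ ρ := by
  rw [Ibil_comm, Ibil_add_left, Ibil_comm ν μ, Ibil_comm ρ μ]

lemma Ibil_smul_right (r : ℝ) (μ ρ : SignedMeasure X) : Ibil μ (r • ρ) = r * Ibil μ ρ := by
  rw [Ibil_comm, Ibil_smul_left, Ibil_comm ρ μ]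

lemma jd_toSM (m : Measure X) [IsFiniteMeasure m] :
    m.toSignedMeasure.toJordanDecomposition =
      ⟨m, 0, MeasureTheory.Measure.MutuallySingular.zero_right⟩ := by
  apply MeasureTheory.JordanDecomposition.toSignedMeasure_injective
  rw [MeasureTheory.SignedMeasure.toSignedMeasure_toJordanDecomposition]
  unfold MeasureTheory.JordanDecomposition.toSignedMeasure
  simp

lemma dirac_univ (x : X) : (Measure.dirac x).toSignedMeasure Set.univ = 1 := by
  rw [Measure.toSignedMeasure_apply_measurable MeasurableSet.univ]; simp

lemma dmu_dirac (x z : X) : dmu (Measure.dirac x).toSignedMeasure z = dist z x := by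
  unfold dmu; rw [jd_toSM]; simp [integral_dirac]

lemma Ibil_dirac (x : X) (μ : SignedMeasure X) :
    Ibil μ (Measure.dirac x).toSignedMeasure = dmu μ x := by
  unfold Ibil
  simp_rw [dmu_dirac x, dist_comm _ x]
  rfl

lemma Ien_dirac (x : X) : Ibil (Measure.dirac x).toSignedMeasure
    (Measure.dirac x).toSignedMeasure = 0 := by
  unfold Ibil; rw [jd_toSM]; simp [integral_dirac, dmu_dirac]

/-- the bilinear form -/
noncomputable def Bf (M : ℝ) (μ ν : SignedMeasure X) : ℝ :=
  (M + 1) * (μ Set.univ * ν Set.univ) - Ibil μ ν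

lemma Bf_expand (M t : ℝ) (μ ν : SignedMeasure X) :
    Bf M (μ + t • ν) (μ + t • ν) =
      (Bf M ν ν) * (t * t) + (2 * Bf M μ ν) * t + Bf M μ μ := by
  unfold Bf
  rw [Ibil_add_left, Ibil_add_right, Ibil_add_right, Ibil_smul_left, Ibil_smul_left,
    Ibil_smul_right, Ibil_smul_right, Ibil_comm ν μ]
  have h1 : (μ + t • ν) Set.univ = μ Set.univ + t * ν Set.univ := by
    rw [VectorMeasure.add_apply, VectorMeasure.smul_apply]; rfl
  rw [h1]; ring

end Stmt18Aux

open Stmt18Aux in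
/-- For a compact quasihypermetric space with `M(X) < ∞`, writing
`‖μ‖_E = ((M(X)+1)·μ(X)² − I(μ))^{1/2}`:
(1) `|μ(X)| ≤ ‖μ‖_E`, and (2) `‖d_μ‖_∞ ≤ (M(X)+1+(M(X)+1)^{1/2})·‖μ‖_E`. -/
theorem stmt_18 {X : Type*} [MetricSpace X] [CompactSpace X]
    [MeasurableSpace X] [BorelSpace X]
    (hq : ∀ ν : SignedMeasure X, ν Set.univ = 0 → Ien ν ≤ 0)
    (hM : MXsup X < ⊤) :
    (∀ μ : SignedMeasure X,
      |μ Set.univ| ≤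
        Real.sqrt (((MXsup X).toReal + 1) * (μ Set.univ) ^ 2 - Ien μ)) ∧
    (∀ μ : SignedMeasure X, ∀ x : X,
      |dmu μ x| ≤
        ((MXsup X).toReal + 1 + Real.sqrt ((MXsup X).toReal + 1)) *
          Real.sqrt (((MXsup X).toReal + 1) * (μ Set.univ) ^ 2 - Ien μ)) := by
  set M : ℝ := (MXsup X).toReal with hMdef
  -- step 1 : energies of unit-mass measures are bounded by M
  have key1 : ∀ ν : SignedMeasure X, ν Set.univ = 1 → Ien ν ≤ M := by
    intro ν hν
    have h1 : ((Ien ν : ℝ) : EReal) ≤ MXsup X :=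
      le_iSup (fun μ : {μ : SignedMeasure X // μ Set.univ = 1} => ((Ien μ.1 : ℝ) : EReal))
        ⟨ν, hν⟩
    have := EReal.toReal_le_toReal h1 (EReal.coe_ne_bot _) hM.ne
    simpa using this
  -- step 2 : I(μ) ≤ M μ(X)²
  have key2 : ∀ μ : SignedMeasure X, Ien μ ≤ M * (μ Set.univ) ^ 2 := by
    intro μ
    set c : ℝ := μ Set.univ with hc
    by_cases hc0 : c = 0
    · rw [hc0]; simpa using hq μ hc0
    · have hν : (c⁻¹ • μ) Set.univ = 1 := by
        rw [VectorMeasure.smul_apply, smul_eq_mul, ← hc, inv_mul_cancel₀ hc0]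
      have hIen : Ien (c⁻¹ • μ) = c⁻¹ * (c⁻¹ * Ien μ) := by
        unfold Ien
        rw [Ibil_smul_left, Ibil_smul_right]
      have hb := key1 _ hν
      rw [hIen] at hb
      have hc2 : (0:ℝ) < c ^ 2 := by positivity
      have : c ^ 2 * (c⁻¹ * (c⁻¹ * Ien μ)) ≤ c ^ 2 * M :=
        mul_le_mul_of_nonneg_left hb (le_of_lt hc2)
      have he : c ^ 2 * (c⁻¹ * (c⁻¹ * Ien μ)) = Ien μ := by
        field_simp
      rw [he] at this; linarith
  -- step 3 : positivity of the form
  have key3 : ∀ μ : SignedMeasure X, (μ Set.univ) ^ 2 ≤ Bf M μ μ := by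
    intro μ
    have := key2 μ
    unfold Bf Ien at *
    nlinarith [sq_nonneg (μ Set.univ)]
  have hBnn : ∀ μ : SignedMeasure X, 0 ≤ Bf M μ μ := fun μ =>
    le_trans (sq_nonneg _) (key3 μ)
  -- Cauchy-Schwarz
  have keyCS : ∀ μ ν : SignedMeasure X, (Bf M μ ν) ^ 2 ≤ Bf M μ μ * Bf M ν ν := by
    intro μ ν
    have hquad : ∀ t : ℝ,
        0 ≤ (Bf M ν ν) * (t * t) + (2 * Bf M μ ν) * t + Bf M μ μ := by
      intro t
      rw [← Bf_expand M t μ ν]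
      exact le_trans (sq_nonneg _) (key3 _)
    have := discrim_le_zero hquad
    unfold discrim at this
    nlinarith
  have hBId : ∀ μ : SignedMeasure X,
      Bf M μ μ = (M + 1) * (μ Set.univ) ^ 2 - Ien μ := by
    intro μ; unfold Bf Ien; ring
  have part1 : ∀ μ : SignedMeasure X,
      |μ Set.univ| ≤ Real.sqrt ((M + 1) * (μ Set.univ) ^ 2 - Ien μ) := by
    intro μ
    have h3 := key3 μ
    rw [hBId μ] at h3
    calc |μ Set.univ| = Real.sqrt ((μ Set.univ) ^ 2) := (Real.sqrt_sq_eq_abs _).symm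
      _ ≤ _ := Real.sqrt_le_sqrt h3
  refine ⟨part1, ?_⟩
  intro μ x
  set c : ℝ := μ Set.univ with hc
  set s : ℝ := Real.sqrt ((M + 1) * c ^ 2 - Ien μ) with hs
  have hδuniv : (Measure.dirac x).toSignedMeasure Set.univ = 1 := dirac_univ x
  have hIμδ : Ibil μ (Measure.dirac x).toSignedMeasure = dmu μ x := Ibil_dirac x μ
  have hIδδ : Ien (Measure.dirac x).toSignedMeasure = 0 := Ien_dirac x
  have hM0 : 0 ≤ M := by
    have := key1 _ hδuniv; rw [hIδδ] at this; exact this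
  have hBδδ : Bf M (Measure.dirac x).toSignedMeasure (Measure.dirac x).toSignedMeasure
      = M + 1 := by
    have h0 : Ibil (Measure.dirac x).toSignedMeasure (Measure.dirac x).toSignedMeasure = 0 :=
      hIδδ
    unfold Bf; rw [hδuniv, h0]; ring
  have hBμδ : Bf M μ (Measure.dirac x).toSignedMeasure = (M + 1) * c - dmu μ x := by
    unfold Bf; rw [hδuniv, hIμδ, ← hc]; ring
  -- bound |Bf M μ δ|
  have hCS := keyCS μ (Measure.dirac x).toSignedMeasure
  rw [hBδδ] at hCS
  have hsnn : 0 ≤ s := Real.sqrt_nonneg _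
  have habs : |Bf M μ (Measure.dirac x).toSignedMeasure| ≤ s * Real.sqrt (M + 1) := by
    calc |Bf M μ (Measure.dirac x).toSignedMeasure|
        = Real.sqrt ((Bf M μ (Measure.dirac x).toSignedMeasure) ^ 2) :=
          (Real.sqrt_sq_eq_abs _).symm
      _ ≤ Real.sqrt (Bf M μ μ * (M + 1)) := Real.sqrt_le_sqrt hCS
      _ = Real.sqrt (Bf M μ μ) * Real.sqrt (M + 1) := Real.sqrt_mul (hBnn μ) _
      _ = s * Real.sqrt (M + 1) := by rw [hs, hBId μ]
  have hcs : |c| ≤ s := part1 μ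
  have hδd : dmu μ x = (M + 1) * c - Bf M μ (Measure.dirac x).toSignedMeasure := by
    rw [hBμδ]; ring
  have htri : |dmu μ x| ≤ (M + 1) * |c| + |Bf M μ (Measure.dirac x).toSignedMeasure| := by
    rw [hδd]
    calc |(M + 1) * c - Bf M μ (Measure.dirac x).toSignedMeasure|
        ≤ |(M + 1) * c| + |Bf M μ (Measure.dirac x).toSignedMeasure| := abs_sub _ _
      _ = (M + 1) * |c| + |Bf M μ (Measure.dirac x).toSignedMeasure| := by
          rw [abs_mul, abs_of_nonneg (by linarith : (0:ℝ) ≤ M + 1)]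
  have h1 : (M + 1) * |c| ≤ (M + 1) * s :=
    mul_le_mul_of_nonneg_left hcs (by linarith)
  calc |dmu μ x| ≤ (M + 1) * |c| + |Bf M μ (Measure.dirac x).toSignedMeasure| := htri
    _ ≤ (M + 1) * s + s * Real.sqrt (M + 1) := add_le_add h1 habs
    _ = (M + 1 + Real.sqrt (M + 1)) * s := by ring
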